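/- There is no rational function φ_z(t) ∈ ℚ(t), nonconstant, such that both √(1 + 4φ_z(t)) and √(φ_z(t)(φ_z(t) − 4)) are rational functions of t. -/

import Mathlib

open Polynomial

private lemma sq_part_dvd' {f A : ℚ[X]} (hf : f ≠ 0) (h : Associated (A^2) f) :
    A ∣ f ∧ A ∣ derivative f ∧ f.natDegree = 2 * A.natDegree ∧ A ≠ 0 := by
  obtain ⟨u, hu⟩ := h
  have hA : A ≠ 0 := by
    rintro rfl; rw [← hu] at hf; simp at hf
  refine ⟨(dvd_pow_self A two_ne_zero).trans (Dvd.intro _ hu), ?_, ?_, hA⟩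
  · obtain ⟨c, hc, hcu⟩ := Polynomial.isUnit_iff.mp u.isUnit
    rw [← hu, ← hcu, derivative_mul, derivative_C, mul_zero, add_zero, derivative_pow]
    exact dvd_mul_of_dvd_left (dvd_mul_of_dvd_left (dvd_mul_of_dvd_right
      (by simp) _) _) _
  · rw [← hu, natDegree_mul (pow_ne_zero _ hA) u.ne_zero, natDegree_pow,
      Polynomial.natDegree_eq_zero_of_isUnit u.isUnit, add_zero, mul_comm]

private lemma key_contra' {a b A B C D : ℚ[X]} (hab : IsCoprime a b)
    (ha : a ≠ 0) (hb : b ≠ 0) (hc : b + 4*a ≠ 0) (hd : a - 4*b ≠ 0)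
    (hW : wronskian a b ≠ 0)
    (hA : Associated (A^2) a) (hB : Associated (B^2) b)
    (hC : Associated (C^2) (b + 4*a)) (hD : Associated (D^2) (a - 4*b)) : False := by
  obtain ⟨hAd, hAd', hAdeg, hA0⟩ := sq_part_dvd' ha hA
  obtain ⟨hBd, hBd', hBdeg, hB0⟩ := sq_part_dvd' hb hB
  obtain ⟨hCd, hCd', hCdeg, hC0⟩ := sq_part_dvd' hc hC
  obtain ⟨hDd, hDd', hDdeg, hD0⟩ := sq_part_dvd' hd hD
  set W := wronskian a b with hWdef
  have hWe : W = a * derivative b - derivative a * b := rfl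
  have h4 : (Polynomial.C (4⁻¹:ℚ)) * 4 = (1:ℚ[X]) := by
    rw [show (4:ℚ[X]) = Polynomial.C (4:ℚ) by rw [map_ofNat], ← Polynomial.C_mul]; norm_num
  have h17 : (Polynomial.C (17⁻¹:ℚ)) * 17 = (1:ℚ[X]) := by
    rw [show (17:ℚ[X]) = Polynomial.C (17:ℚ) by rw [map_ofNat], ← Polynomial.C_mul]; norm_num
  have dvdA : A ∣ W := by
    rw [hWe]; exact dvd_sub (hAd.mul_right _) (hAd'.mul_right _)
  have dvdB : B ∣ W := by
    rw [hWe]; exact dvd_sub (hBd'.mul_left _) (hBd.mul_left _)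
  have dvdC : C ∣ W := by
    have e3 : W = a * derivative (b + 4*a) - derivative a * (b + 4*a) := by
      rw [hWe]
      simp only [derivative_add, derivative_mul, derivative_ofNat, zero_mul, zero_add]
      ring
    rw [e3]; exact dvd_sub (hCd'.mul_left _) (hCd.mul_left _)
  have dvdD : D ∣ W := by
    have e4 : W = Polynomial.C (4⁻¹:ℚ) *
        (derivative a * (a - 4*b) - a * derivative (a - 4*b)) := by
      have h40 : (4:ℚ[X]) * W = derivative a * (a - 4*b) - a * derivative (a - 4*b) := by
        rw [hWe]
        simp only [derivative_sub, derivative_mul, derivative_ofNat, zero_mul, zero_add]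
        ring
      rw [← h40, ← mul_assoc, h4, one_mul]
    rw [e4]
    exact (dvd_sub (hDd.mul_left _) (hDd'.mul_left _)).mul_left _
  obtain ⟨u, v, huv⟩ := hab
  have hab' : IsCoprime a b := ⟨u, v, huv⟩
  have cac : IsCoprime a (b + 4*a) := ⟨u - 4*v, v, by linear_combination huv⟩
  have cbc : IsCoprime b (b + 4*a) :=
    ⟨v - u * Polynomial.C (4⁻¹:ℚ), u * Polynomial.C (4⁻¹:ℚ), by linear_combination huv + u*a*h4⟩
  have cad : IsCoprime a (a - 4*b) :=
    ⟨u + v * Polynomial.C (4⁻¹:ℚ), -(v * Polynomial.C (4⁻¹:ℚ)), by linear_combination huv + v*b*h4⟩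
  have cbd : IsCoprime b (a - 4*b) := ⟨4*u + v, u, by linear_combination huv⟩
  have ccd : IsCoprime (b + 4*a) (a - 4*b) :=
    ⟨Polynomial.C (17⁻¹:ℚ) * (4*u + v), Polynomial.C (17⁻¹:ℚ) * (u - 4*v),
      by linear_combination (Polynomial.C (17⁻¹:ℚ) * 17) * huv + h17⟩
  have cAB : IsCoprime A B := (hab'.of_isCoprime_of_dvd_left hAd).of_isCoprime_of_dvd_right hBd
  have cAC : IsCoprime A C := (cac.of_isCoprime_of_dvd_left hAd).of_isCoprime_of_dvd_right hCd
  have cBC : IsCoprime B C := (cbc.of_isCoprime_of_dvd_left hBd).of_isCoprime_of_dvd_right hCd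
  have cAD : IsCoprime A D := (cad.of_isCoprime_of_dvd_left hAd).of_isCoprime_of_dvd_right hDd
  have cBD : IsCoprime B D := (cbd.of_isCoprime_of_dvd_left hBd).of_isCoprime_of_dvd_right hDd
  have cCD : IsCoprime C D := (ccd.of_isCoprime_of_dvd_left hCd).of_isCoprime_of_dvd_right hDd
  have hABCD : A * B * C * D ∣ W :=
    ((cAD.mul_left cBD).mul_left cCD).mul_dvd
      ((cAC.mul_left cBC).mul_dvd (cAB.mul_dvd dvdA dvdB) dvdC) dvdD
  have hsum : A.natDegree + B.natDegree + C.natDegree + D.natDegree ≤ W.natDegree := by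
    have h1 := Polynomial.natDegree_le_of_dvd hABCD hW
    rwa [natDegree_mul (mul_ne_zero (mul_ne_zero hA0 hB0) hC0) hD0,
      natDegree_mul (mul_ne_zero hA0 hB0) hC0, natDegree_mul hA0 hB0] at h1
  have hlt1 : W.natDegree < a.natDegree + b.natDegree := natDegree_wronskian_lt_add hW
  have e17 : wronskian (b + 4*a) (a - 4*b) = (-17) * W := by
    rw [hWe]
    simp only [wronskian, derivative_add, derivative_sub, derivative_mul, derivative_ofNat,
      zero_mul, zero_add]
    ring
  have h17ne : (-17 : ℚ[X]) ≠ 0 := by norm_num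
  have hW2 : wronskian (b + 4*a) (a - 4*b) ≠ 0 := by
    rw [e17]; exact mul_ne_zero h17ne hW
  have hlt2 : W.natDegree < (b + 4*a).natDegree + (a - 4*b).natDegree := by
    have h2 := natDegree_wronskian_lt_add hW2
    rwa [e17, natDegree_mul h17ne hW, show (-17:ℚ[X]).natDegree = 0 by
      rw [show (-17:ℚ[X]) = Polynomial.C (-17:ℚ) by rw [map_neg, map_ofNat]]
      exact natDegree_C _, zero_add] at h2
  omega

theorem no_simultaneous_rationalization :
    ¬ ∃ φz p q : RatFunc ℚ, (¬ ∃ c : ℚ, φz = RatFunc.C c) ∧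
      p^2 = 1 + 4*φz ∧ q^2 = φz * (φz - 4) := by
  rintro ⟨z, p, q, hnc, hp, hq⟩
  set a := z.num with hadef
  set b := z.denom with hbdef
  have hb : b ≠ 0 := z.denom_ne_zero
  have hab : IsCoprime a b := z.isCoprime_num_denom
  have hz : algebraMap ℚ[X] (RatFunc ℚ) a / algebraMap _ _ b = z := z.num_div_denom
  have hbne : algebraMap ℚ[X] (RatFunc ℚ) b ≠ 0 := RatFunc.algebraMap_ne_zero hb
  have ha : a ≠ 0 := by
    intro h0
    exact hnc ⟨0, by rw [map_zero, ← hz, h0, map_zero, zero_div]⟩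
  have hane : algebraMap ℚ[X] (RatFunc ℚ) a ≠ 0 := RatFunc.algebraMap_ne_zero ha
  -- b + 4a ≠ 0
  have hc : b + 4*a ≠ 0 := by
    intro h0
    apply hnc
    refine ⟨-(4⁻¹:ℚ), ?_⟩
    rw [← hz, show b = -(4*a) by linear_combination h0]
    rw [map_neg, map_mul, map_ofNat, div_neg, div_mul_eq_div_div_swap, div_self hane]
    rw [show ((4:RatFunc ℚ)) = RatFunc.C (4:ℚ) by rw [map_ofNat], ← map_one RatFunc.C,
      ← map_div₀, ← map_neg]
    norm_num
  have hd : a - 4*b ≠ 0 := by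
    intro h0
    apply hnc
    refine ⟨(4:ℚ), ?_⟩
    rw [← hz, show a = 4*b by linear_combination h0, map_mul, map_ofNat,
      mul_div_assoc, div_self hbne, mul_one, show ((4:RatFunc ℚ)) = RatFunc.C (4:ℚ) by
        rw [map_ofNat]]
  -- wronskian nonzero
  have hW : wronskian a b ≠ 0 := by
    intro hw0
    have hwe : a * derivative b = derivative a * b := by
      have h0 : a * derivative b - derivative a * b = 0 := hw0
      exact sub_eq_zero.mp h0
    by_cases hda : a.natDegree = 0
    · have ha' : derivative a = 0 := by
        rw [Polynomial.eq_C_of_natDegree_eq_zero hda]; simp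
      have hb' : derivative b = 0 := by
        rw [ha', zero_mul] at hwe
        exact (mul_eq_zero.mp hwe).resolve_left ha
      have hdb : b.natDegree = 0 := natDegree_eq_zero_of_derivative_eq_zero hb'
      obtain ⟨ca, hca⟩ := Polynomial.natDegree_eq_zero.mp hda
      obtain ⟨cb, hcb⟩ := Polynomial.natDegree_eq_zero.mp hdb
      refine hnc ⟨ca / cb, ?_⟩
      rw [← hz, ← hca, ← hcb, RatFunc.algebraMap_C, RatFunc.algebraMap_C, ← map_div₀]
    · have ha' : derivative a ≠ 0 := fun h => hda (natDegree_eq_zero_of_derivative_eq_zero h)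
      have hdvd : a ∣ derivative a :=
        hab.dvd_of_dvd_mul_right (by rw [← hwe]; exact Dvd.intro _ rfl)
      have h1 := Polynomial.natDegree_le_of_dvd hdvd ha'
      have h2 := Polynomial.natDegree_derivative_lt hda
      omega
  -- extract square roots as polynomials
  have hs2 : (p * algebraMap ℚ[X] _ b)^2 = algebraMap ℚ[X] _ (b * (b + 4*a)) := by
    rw [mul_pow, hp, ← hz]
    field_simp
    rw [map_mul, map_add, map_mul, map_ofNat]
  have hr2 : (q * algebraMap ℚ[X] _ b)^2 = algebraMap ℚ[X] _ (a * (a - 4*b)) := by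
    rw [mul_pow, hq, ← hz]
    field_simp
    rw [map_mul, map_sub, map_mul, map_ofNat]
    ring
  obtain ⟨S, hS⟩ : ∃ S : ℚ[X], algebraMap _ _ S = p * algebraMap ℚ[X] _ b := by
    refine IsIntegrallyClosed.isIntegral_iff.mp
      ⟨Polynomial.X^2 - Polynomial.C (b * (b + 4*a)),
        Polynomial.monic_X_pow_sub_C _ two_ne_zero, ?_⟩
    simp [hs2]
  obtain ⟨R, hR⟩ : ∃ R : ℚ[X], algebraMap _ _ R = q * algebraMap ℚ[X] _ b := by
    refine IsIntegrallyClosed.isIntegral_iff.mp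
      ⟨Polynomial.X^2 - Polynomial.C (a * (a - 4*b)),
        Polynomial.monic_X_pow_sub_C _ two_ne_zero, ?_⟩
    simp [hr2]
  have hS2 : b * (b + 4*a) = S^2 := by
    apply IsFractionRing.injective ℚ[X] (RatFunc ℚ)
    rw [map_pow, hS, hs2]
  have hR2 : a * (a - 4*b) = R^2 := by
    apply IsFractionRing.injective ℚ[X] (RatFunc ℚ)
    rw [map_pow, hR, hr2]
  -- coprimality needed for square extraction
  obtain ⟨u, v, huv⟩ := hab
  have hab' : IsCoprime a b := ⟨u, v, huv⟩
  have h4 : (Polynomial.C (4⁻¹:ℚ)) * 4 = (1:ℚ[X]) := by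
    rw [show (4:ℚ[X]) = Polynomial.C (4:ℚ) by rw [map_ofNat], ← Polynomial.C_mul]; norm_num
  have cbc : IsCoprime b (b + 4*a) :=
    ⟨v - u * Polynomial.C (4⁻¹:ℚ), u * Polynomial.C (4⁻¹:ℚ), by linear_combination huv + u*a*h4⟩
  have cad : IsCoprime a (a - 4*b) :=
    ⟨u + v * Polynomial.C (4⁻¹:ℚ), -(v * Polynomial.C (4⁻¹:ℚ)), by linear_combination huv + v*b*h4⟩
  have hgbc : IsUnit (gcd b (b + 4*a)) :=
    cbc.isUnit_of_dvd' (gcd_dvd_left _ _) (gcd_dvd_right _ _)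
  have hgcb : IsUnit (gcd (b + 4*a) b) :=
    cbc.symm.isUnit_of_dvd' (gcd_dvd_left _ _) (gcd_dvd_right _ _)
  have hgad : IsUnit (gcd a (a - 4*b)) :=
    cad.isUnit_of_dvd' (gcd_dvd_left _ _) (gcd_dvd_right _ _)
  have hgda : IsUnit (gcd (a - 4*b) a) :=
    cad.symm.isUnit_of_dvd' (gcd_dvd_left _ _) (gcd_dvd_right _ _)
  obtain ⟨B, hB⟩ := exists_associated_pow_of_mul_eq_pow hgbc hS2
  obtain ⟨C, hC⟩ := exists_associated_pow_of_mul_eq_pow hgcb (by rw [mul_comm]; exact hS2)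
  obtain ⟨A, hA⟩ := exists_associated_pow_of_mul_eq_pow hgad hR2
  obtain ⟨D, hD⟩ := exists_associated_pow_of_mul_eq_pow hgda (by rw [mul_comm]; exact hR2)
  exact key_contra' hab' ha hb hc hd hW hA hB hC hD
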